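/- Let b > 1 and let (μ_i)_{i ≥ 1} be a sequence of non-negative real numbers satisfying μ_i ≤ C₀ · i^{-b} for all i ≥ 1, for some constant C₀ > 0. Then there exists a constant C > 0 (depending only on b and C₀) such that for all λ > 0, the effective dimension N(λ) := ∑_{i=1}^{∞} μ_i/(μ_i + λ) satisfies N(λ) ≤ C · λ^{-1/b}. -/

import Mathlib

open Real Finset

set_option maxHeartbeats 1000000

private lemma stmt7_key (b : ℝ) (hb : 1 < b) (x : ℝ) (hx : 1 ≤ x) :
    (b - 1) * (x + 1) ^ (-b) ≤ x ^ (1 - b) - (x + 1) ^ (1 - b) := by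
  have hx0 : (0 : ℝ) < x := lt_of_lt_of_le one_pos hx
  obtain ⟨c, hc, hslope⟩ :=
    exists_hasDerivAt_eq_slope (fun t : ℝ => t ^ (1 - b))
      (fun t : ℝ => (1 - b) * t ^ (-b)) (by linarith : x < x + 1)
      (by
        apply ContinuousOn.rpow_const continuousOn_id
        intro t ht
        exact Or.inl (lt_of_lt_of_le hx0 ht.1).ne')
      (by
        intro t ht
        have h0 : t ≠ 0 := (lt_of_lt_of_le hx0 ht.1.le).ne'
        have := Real.hasDerivAt_rpow_const (x := t) (p := 1 - b) (Or.inl h0)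
        simpa [show (1 - b - 1) = -b by ring] using this)
  have hc0 : 0 < c := lt_of_lt_of_le hx0 hc.1.le
  have hcx : c ≤ x + 1 := hc.2.le
  have hmono : (x + 1) ^ (-b) ≤ c ^ (-b) :=
    Real.rpow_le_rpow_of_nonpos hc0 hcx (by linarith)
  have hslope' : (1 - b) * c ^ (-b) = (x + 1) ^ (1 - b) - x ^ (1 - b) := by
    simpa using hslope
  nlinarith [hmono, hslope']

private lemma stmt7_shift_summable (b : ℝ) (hb : 1 < b) (n : ℕ) :
    Summable (fun k : ℕ => ((n : ℝ) + (k : ℝ) + 1) ^ (-b)) := by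
  have h0 : Summable (fun k : ℕ => ((k : ℝ)) ^ (-b)) :=
    Real.summable_nat_rpow.2 (by linarith)
  have h1 := (summable_nat_add_iff (n + 1)).2 h0
  refine h1.congr fun k => ?_
  push_cast
  ring_nf

private lemma stmt7_tail (b : ℝ) (hb : 1 < b) (n : ℕ) (hn : 1 ≤ n) :
    ∑' k : ℕ, ((n : ℝ) + (k : ℝ) + 1) ^ (-b) ≤ (n : ℝ) ^ (1 - b) / (b - 1) := by
  have hb1 : (0 : ℝ) < b - 1 := by linarith
  have hn1 : (1 : ℝ) ≤ (n : ℝ) := by exact_mod_cast hn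
  refine tsum_le_of_sum_range_le
    (fun k => Real.rpow_nonneg (by positivity) _) fun N => ?_
  have key : ∀ k ∈ range N, ((n : ℝ) + (k : ℝ) + 1) ^ (-b) ≤
      (((n : ℝ) + k) ^ (1 - b) - ((n : ℝ) + ((k + 1 : ℕ) : ℝ)) ^ (1 - b)) / (b - 1) := by
    intro k _
    rw [le_div_iff₀ hb1, mul_comm]
    have hk : (0:ℝ) ≤ (k : ℝ) := Nat.cast_nonneg k
    have := stmt7_key b hb ((n : ℝ) + k) (by linarith)
    have e : (n : ℝ) + ((k + 1 : ℕ) : ℝ) = ((n : ℝ) + k) + 1 := by push_cast; ring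
    rw [e]
    linarith [this]
  calc ∑ k ∈ range N, ((n : ℝ) + (k : ℝ) + 1) ^ (-b)
      ≤ ∑ k ∈ range N,
          (((n : ℝ) + k) ^ (1 - b) - ((n : ℝ) + ((k + 1 : ℕ) : ℝ)) ^ (1 - b)) / (b - 1) :=
        Finset.sum_le_sum key
    _ = (∑ k ∈ range N,
          (((n : ℝ) + (k : ℝ)) ^ (1 - b) - ((n : ℝ) + ((k + 1 : ℕ) : ℝ)) ^ (1 - b))) / (b - 1) := by
        rw [Finset.sum_div]
    _ = (((n : ℝ) + ((0 : ℕ) : ℝ)) ^ (1 - b) - ((n : ℝ) + (N : ℝ)) ^ (1 - b)) / (b - 1) := by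
        rw [Finset.sum_range_sub' (fun k : ℕ => ((n : ℝ) + (k : ℝ)) ^ (1 - b))]
    _ ≤ (n : ℝ) ^ (1 - b) / (b - 1) := by
        have h0 : 0 ≤ ((n : ℝ) + (N : ℝ)) ^ (1 - b) := Real.rpow_nonneg (by positivity) _
        apply div_le_div_of_nonneg_right ?_ hb1.le
        simp only [Nat.cast_zero, add_zero]
        linarith

/-- if `b > 1` and the non-negative eigenvalue sequence `(μ_i)_{i ≥ 1}`
satisfies `μ_i ≤ C₀ · i^{-b}`, then there is `C > 0` (depending only on `b, C₀`)
such that the effective dimension `N(λ) = ∑_{i=1}^∞ μ_i/(μ_i + λ)` satisfies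
`N(λ) ≤ C · λ^{-1/b}` for all `λ > 0`. (The sequence is indexed by `i : ℕ`,
with `μ i` standing for `μ_{i+1}`.) -/
theorem stmt_7 (b C₀ : ℝ) (hb : 1 < b) (hC₀ : 0 < C₀) (μ : ℕ → ℝ)
    (hμ : ∀ i, 0 ≤ μ i)
    (hbound : ∀ i : ℕ, μ i ≤ C₀ * ((i : ℝ) + 1) ^ (-b)) :
    ∃ C > (0 : ℝ), ∀ lam > (0 : ℝ),
      Summable (fun i : ℕ => μ i / (μ i + lam)) ∧
      ∑' i : ℕ, μ i / (μ i + lam) ≤ C * lam ^ (-1 / b) := by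
  have hb0 : (0 : ℝ) < b := by linarith
  have hb1 : (0 : ℝ) < b - 1 := by linarith
  have hS : Summable (fun i : ℕ => ((i : ℝ) + 1) ^ (-b)) := by
    simpa using stmt7_shift_summable b hb 0
  set S : ℝ := ∑' i : ℕ, ((i : ℝ) + 1) ^ (-b) with hSdef
  have hSnn : 0 ≤ S := tsum_nonneg fun i => Real.rpow_nonneg (by positivity) _
  refine ⟨C₀ * S + 2 + C₀ / (b - 1), by positivity, fun lam hlam => ?_⟩
  have hexp : (-1 / b : ℝ) ≤ 0 := by
    apply div_nonpos_of_nonpos_of_nonneg <;> linarith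
  -- termwise bound
  have htb : ∀ i : ℕ, μ i / (μ i + lam) ≤ C₀ * ((i : ℝ) + 1) ^ (-b) / lam := by
    intro i
    have h1 : μ i / (μ i + lam) ≤ μ i / lam := by
      gcongr
      · exact hμ i
      · linarith [hμ i]
    have h2 : μ i / lam ≤ C₀ * ((i : ℝ) + 1) ^ (-b) / lam := by
      gcongr
      exact hbound i
    exact h1.trans h2
  have hbig : Summable (fun i : ℕ => C₀ * ((i : ℝ) + 1) ^ (-b) / lam) :=
    (hS.mul_left C₀).div_const lam
  have hsum : Summable (fun i : ℕ => μ i / (μ i + lam)) :=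
    Summable.of_nonneg_of_le
      (fun i => div_nonneg (hμ i) (by linarith [hμ i])) htb hbig
  refine ⟨hsum, ?_⟩
  rcases le_or_gt 1 lam with hl1 | hl1
  · -- large lambda
    have h1 : ∑' i : ℕ, μ i / (μ i + lam) ≤ C₀ * S / lam := by
      have := Summable.tsum_le_tsum htb hsum hbig
      calc ∑' i : ℕ, μ i / (μ i + lam)
          ≤ ∑' i : ℕ, C₀ * ((i : ℝ) + 1) ^ (-b) / lam := this
        _ = (∑' i : ℕ, C₀ * ((i : ℝ) + 1) ^ (-b)) / lam := by rw [tsum_div_const]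
        _ = C₀ * S / lam := by rw [tsum_mul_left]
    have h2 : C₀ * S / lam ≤ C₀ * S * lam ^ (-1 / b : ℝ) := by
      rw [div_eq_mul_inv, ← Real.rpow_neg_one lam]
      have : lam ^ (-1 : ℝ) ≤ lam ^ (-1 / b : ℝ) := by
        apply Real.rpow_le_rpow_of_exponent_le hl1
        rw [neg_div]
        have : 1 / b ≤ 1 := by
          rw [div_le_one hb0]; linarith
        linarith
      exact mul_le_mul_of_nonneg_left this (by positivity)
    have h3 : (0:ℝ) < lam ^ (-1 / b : ℝ) := Real.rpow_pos_of_pos hlam _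
    calc ∑' i : ℕ, μ i / (μ i + lam) ≤ C₀ * S * lam ^ (-1 / b : ℝ) := h1.trans h2
      _ ≤ (C₀ * S + 2 + C₀ / (b - 1)) * lam ^ (-1 / b : ℝ) := by
          have : (0:ℝ) ≤ 2 + C₀ / (b - 1) := by positivity
          nlinarith
  · -- small lambda
    set t : ℝ := lam ^ (-1 / b : ℝ) with htdef
    have ht1 : 1 ≤ t :=
      Real.one_le_rpow_of_pos_of_le_one_of_nonpos hlam hl1.le hexp
    have ht0 : 0 < t := by linarith
    set n : ℕ := ⌈t⌉₊ with hndef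
    have hn1 : 1 ≤ n := Nat.one_le_iff_ne_zero.2 (by
      simp only [hndef, ne_eq, Nat.ceil_eq_zero, not_le]; linarith)
    have hnt : t ≤ (n : ℝ) := Nat.le_ceil t
    have hn2 : (n : ℝ) ≤ 2 * t := by
      have := Nat.ceil_lt_add_one (le_of_lt ht0)
      have : (n : ℝ) < t + 1 := this
      linarith
    rw [← Summable.sum_add_tsum_nat_add n hsum]
    have hhead : ∑ i ∈ range n, μ i / (μ i + lam) ≤ (n : ℝ) := by
      calc ∑ i ∈ range n, μ i / (μ i + lam) ≤ ∑ i ∈ range n, (1:ℝ) := by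
            apply Finset.sum_le_sum
            intro i _
            rw [div_le_one (by linarith [hμ i])]
            linarith [hμ i]
        _ = (n : ℝ) := by simp
    have htail : ∑' k : ℕ, μ (k + n) / (μ (k + n) + lam) ≤ C₀ / (b - 1) * t := by
      have hshift : Summable (fun k : ℕ => ((n : ℝ) + (k : ℝ) + 1) ^ (-b)) :=
        stmt7_shift_summable b hb n
      have hbig2 : Summable (fun k : ℕ => C₀ * ((n : ℝ) + (k : ℝ) + 1) ^ (-b) / lam) :=
        (hshift.mul_left C₀).div_const lam
      have htb2 : ∀ k : ℕ, μ (k + n) / (μ (k + n) + lam) ≤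
          C₀ * ((n : ℝ) + (k : ℝ) + 1) ^ (-b) / lam := by
        intro k
        have := htb (k + n)
        have e : ((k + n : ℕ) : ℝ) + 1 = (n : ℝ) + (k : ℝ) + 1 := by push_cast; ring
        rwa [e] at this
      have hs2 : Summable (fun k : ℕ => μ (k + n) / (μ (k + n) + lam)) :=
        (summable_nat_add_iff n).2 hsum
      calc ∑' k : ℕ, μ (k + n) / (μ (k + n) + lam)
          ≤ ∑' k : ℕ, C₀ * ((n : ℝ) + (k : ℝ) + 1) ^ (-b) / lam :=
            Summable.tsum_le_tsum htb2 hs2 hbig2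
        _ = C₀ * (∑' k : ℕ, ((n : ℝ) + (k : ℝ) + 1) ^ (-b)) / lam := by
            rw [tsum_div_const, tsum_mul_left]
        _ ≤ C₀ * ((n : ℝ) ^ (1 - b) / (b - 1)) / lam :=
            div_le_div_of_nonneg_right
              (mul_le_mul_of_nonneg_left (stmt7_tail b hb n hn1) hC₀.le) hlam.le
        _ ≤ C₀ * (t ^ (1 - b) / (b - 1)) / lam := by
            have hr : (n : ℝ) ^ (1 - b) ≤ t ^ (1 - b) :=
              Real.rpow_le_rpow_of_nonpos ht0 hnt (by linarith)
            exact div_le_div_of_nonneg_right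
              (mul_le_mul_of_nonneg_left
                (div_le_div_of_nonneg_right hr hb1.le) hC₀.le) hlam.le
        _ = C₀ / (b - 1) * t := by
            have hbne : b ≠ 0 := by positivity
            have hkey : t ^ (1 - b) / lam = t := by
              calc t ^ (1 - b) / lam
                  = lam ^ ((-1 / b) * (1 - b)) / lam ^ (1 : ℝ) := by
                    rw [htdef, ← Real.rpow_mul hlam.le, Real.rpow_one]
                _ = lam ^ ((-1 / b) * (1 - b) - 1) := (Real.rpow_sub hlam _ _).symm
                _ = lam ^ (-1 / b : ℝ) := by
                    congr 1
                    field_simp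
                    ring
                _ = t := htdef.symm
            calc C₀ * (t ^ (1 - b) / (b - 1)) / lam
                = C₀ / (b - 1) * (t ^ (1 - b) / lam) := by ring
              _ = C₀ / (b - 1) * t := by rw [hkey]
    have hC : (0:ℝ) ≤ C₀ / (b-1) := by positivity
    calc ∑ i ∈ range n, μ i / (μ i + lam) + ∑' k : ℕ, μ (k + n) / (μ (k + n) + lam)
        ≤ (n : ℝ) + C₀ / (b - 1) * t := add_le_add hhead htail
      _ ≤ 2 * t + C₀ / (b - 1) * t := by linarith
      _ ≤ (C₀ * S + 2 + C₀ / (b - 1)) * t := by nlinarith [mul_nonneg (mul_nonneg hC₀.le hSnn) ht0.le]
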